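/- arXiv:1705.06331 — 2 statements merged into one kernel-verified Lean document; each statement's English description precedes it below -/
import Mathlib

section
/- There is no one-dimensional real-analytic submanifold (closed analytic curve) of ℝ² that is a closed subset of ℝ² and contains the set X = {(x, sin(1/(δx - 1/π))) : x ≤ 1/(2δπ)}: any closed subset Γ of ℝ² which is locally the zero set of a real-analytic function with nonvanishing gradient and contains X must fail to exist. Equivalently, any analytic curve containing X cannot be closed in ℝ². -/
open Filter Topology Set

/-- `Real.sin` is real-analytic everywhere. -/
lemma analyticAt_rsin (x : ℝ) : AnalyticAt ℝ Real.sin x := by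
  have h1 : AnalyticAt ℂ Complex.sin (x : ℂ) :=
    Complex.analyticAt_iff_eventually_differentiableAt.mpr
      (Filter.Eventually.of_forall fun z => Complex.differentiable_sin z)
  have h2 : AnalyticAt ℝ Complex.sin (x : ℂ) := h1.restrictScalars
  have h3 : AnalyticAt ℝ (fun t : ℝ => (Complex.sin (Complex.ofRealCLM t)).re) x :=
    (Complex.reCLM.analyticAt _).comp (h2.comp (Complex.ofRealCLM.analyticAt x))
  have heq : Real.sin = fun t : ℝ => (Complex.sin (Complex.ofRealCLM t)).re := by
    funext t
    simp [← Complex.ofReal_sin]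
  rw [heq]
  exact h3

/-- If a differentiable function takes equal values along a sequence converging to the
basepoint (from points different from the basepoint), its derivative there vanishes. -/
lemma deriv_zero_of_seq {φ : ℝ → ℝ} {d a : ℝ} (hφ : HasDerivAt φ d a)
    (u : ℕ → ℝ) (hu : Tendsto u atTop (𝓝 a))
    (hne : ∀ᶠ n in atTop, u n ≠ a)
    (hz : ∀ᶠ n in atTop, φ (u n) = φ a) : d = 0 := by
  have h1 : Tendsto u atTop (𝓝[≠] a) := by
    rw [tendsto_nhdsWithin_iff]
    exact ⟨hu, hne.mono fun n hn => hn⟩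
  have h2 : Tendsto (fun n => slope φ a (u n)) atTop (𝓝 d) :=
    (hasDerivAt_iff_tendsto_slope.mp hφ).comp h1
  have h3 : (fun n => slope φ a (u n)) =ᶠ[atTop] fun _ => (0 : ℝ) := by
    filter_upwards [hz] with n hn
    simp [slope, hn]
  exact tendsto_nhds_unique (h2.congr' h3) tendsto_const_nhds

theorem no_closed_analytic_curve_containing_X (δ : ℝ) (hδ : 0 < δ)
    (X : Set (ℝ × ℝ))
    (hX : X = {p : ℝ × ℝ |
      p.2 = Real.sin (1 / (δ * p.1 - 1 / Real.pi)) ∧ p.1 ≤ 1 / (2 * δ * Real.pi)}) :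
    ¬ ∃ Γ : Set (ℝ × ℝ), IsClosed Γ ∧ X ⊆ Γ ∧
      ∀ p ∈ Γ, ∃ (U : Set (ℝ × ℝ)) (f : ℝ × ℝ → ℝ),
        IsOpen U ∧ p ∈ U ∧ AnalyticOn ℝ f U ∧
        Γ ∩ U = {q ∈ U | f q = 0} ∧
        ∀ q ∈ U, fderiv ℝ f q ≠ 0 := by
  rintro ⟨Γ, hΓc, hXΓ, hloc⟩
  have hπ : (0:ℝ) < Real.pi := Real.pi_pos
  set x₀ : ℝ := 1 / (δ * Real.pi) with hx₀def
  set c : ℝ := 1 / (2 * δ * Real.pi) with hcdef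
  set g : ℝ → ℝ := fun x => Real.sin (1 / (δ * x - 1 / Real.pi)) with hgdef
  have hδπ : (0:ℝ) < δ * Real.pi := by positivity
  have hx₀val : δ * x₀ - 1 / Real.pi = 0 := by
    rw [hx₀def]
    field_simp
    ring
  have hcx₀ : c < x₀ := by
    rw [hcdef, hx₀def]
    exact one_div_lt_one_div_of_lt hδπ (by nlinarith)
  -- the denominator is negative for x < x₀
  have hneg : ∀ x : ℝ, x < x₀ → δ * x - 1 / Real.pi < 0 := by
    intro x hx
    have := mul_lt_mul_of_pos_left hx hδ
    linarith [hx₀val]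
  -- g is analytic on Iio x₀
  have hgan : ∀ x : ℝ, x < x₀ → AnalyticAt ℝ g x := by
    intro x hx
    have h1 : AnalyticAt ℝ (fun x : ℝ => δ * x - 1 / Real.pi) x :=
      ((analyticAt_const.mul analyticAt_id).sub analyticAt_const)
    have h0 : δ * x - 1 / Real.pi ≠ 0 := (hneg x hx).ne
    exact (analyticAt_rsin _).comp (analyticAt_const.div h1 h0)
  -- points of X are on the graph
  have hXsub : ∀ x : ℝ, x ≤ c → (x, g x) ∈ Γ := by
    intro x hx
    apply hXΓ
    rw [hX]
    exact ⟨rfl, hx⟩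
  -- the set of points where the graph is locally contained in Γ
  set B : Set ℝ := {x : ℝ | x < x₀ ∧ ∀ᶠ t in 𝓝 x, (t, g t) ∈ Γ} with hBdef
  have hBopen : IsOpen B := by
    rw [isOpen_iff_mem_nhds]
    rintro x ⟨hx1, hx2⟩
    filter_upwards [eventually_lt_nhds hx1, hx2.eventually_nhds] with t ht1 ht2
    exact ⟨ht1, ht2⟩
  have hBclos : closure B ∩ Set.Iio x₀ ⊆ B := by
    rintro a ⟨haB, hax⟩
    have hax : a < x₀ := hax
    have hga : AnalyticAt ℝ g a := hgan a hax
    have hcont : ContinuousAt (fun x : ℝ => (x, g x)) a :=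
      continuousAt_id.prodMk hga.continuousAt
    have hBsubΓ : ∀ x ∈ B, (x, g x) ∈ Γ := fun x hx => hx.2.self_of_nhds
    have haΓ : (a, g a) ∈ Γ := by
      have h1 : (a, g a) ∈ closure ((fun x : ℝ => (x, g x)) '' B) :=
        mem_closure_image hcont haB
      have h2 : closure ((fun x : ℝ => (x, g x)) '' B) ⊆ Γ := by
        rw [← hΓc.closure_eq]
        apply closure_mono
        rintro q ⟨x, hx, rfl⟩
        exact hBsubΓ x hx
      exact h2 h1
    obtain ⟨U, f, hU, hpU, hf, hΓU, -⟩ := hloc _ haΓ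
    have hfa : AnalyticAt ℝ f (a, g a) :=
      ((hU.analyticOn_iff_analyticOnNhd).mp hf) _ hpU
    have hh : AnalyticAt ℝ (fun x : ℝ => f (x, g x)) a := by
      have h := AnalyticAt.comp (g := f) (f := fun x : ℝ => (x, g x))
        hfa (analyticAt_id.prod hga)
      simpa [Function.comp_def] using h
    have hUnb : ∀ᶠ x in 𝓝 a, (x, g x) ∈ U := hcont.preimage_mem_nhds (hU.mem_nhds hpU)
    by_cases haB' : a ∈ B
    · exact haB'
    -- frequently zero near a
    have hfreq : ∃ᶠ x in 𝓝[≠] a, f (x, g x) = 0 := by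
      have h1 : ∃ᶠ x in 𝓝 a, x ∈ B := mem_closure_iff_frequently.mp haB
      have h2 : ∃ᶠ x in 𝓝 a, f (x, g x) = 0 ∧ x ∈ ({a}ᶜ : Set ℝ) := by
        refine (h1.and_eventually hUnb).mono ?_
        rintro x ⟨hxB, hxU⟩
        refine ⟨?_, fun h => haB' (h ▸ hxB)⟩
        have hmem : (x, g x) ∈ Γ ∩ U := ⟨hBsubΓ x hxB, hxU⟩
        rw [hΓU] at hmem
        exact hmem.2
      exact frequently_nhdsWithin_iff.mpr h2
    have hev : ∀ᶠ x in 𝓝 a, f (x, g x) = 0 := by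
      rcases hh.eventually_eq_zero_or_eventually_ne_zero with h | h
      · exact h
      · exact absurd ((hfreq.and_eventually h).exists) (by simp)
    refine ⟨hax, ?_⟩
    filter_upwards [hev, hUnb] with t h0 hU'
    have : (t, g t) ∈ Γ ∩ U := by
      rw [hΓU]
      exact ⟨hU', h0⟩
    exact this.1
  -- connectedness: the whole graph over Iio x₀ lies in Γ
  have hBne : (Set.Iio x₀ ∩ B).Nonempty := by
    refine ⟨c - 1, Set.mem_Iio.mpr (by linarith), by linarith, ?_⟩
    filter_upwards [eventually_lt_nhds (show c - 1 < c by linarith)] with t ht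
    exact hXsub t ht.le
  have hall : Set.Iio x₀ ⊆ B :=
    (isPreconnected_Iio).subset_of_closure_inter_subset hBopen hBne
      (fun a ha => hBclos ⟨ha.1, ha.2⟩)
  have hgraph : ∀ x : ℝ, x < x₀ → (x, g x) ∈ Γ := fun x hx =>
    ((hall hx).2).self_of_nhds
  -- tail sequences: for each θ there are graph points (x, sin θ) with x → x₀⁻
  have htail : ∀ θ : ℝ, ∃ xs : ℕ → ℝ, (∀ k, xs k < x₀) ∧
      Tendsto xs atTop (𝓝 x₀) ∧ ∀ k, (xs k, Real.sin θ) ∈ Γ := by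
    intro θ
    set n : ℕ → ℤ := fun k => ⌈θ / (2 * Real.pi)⌉ + (k : ℤ) + 1 with hndef
    set s : ℕ → ℝ := fun k => 2 * Real.pi * (n k) - θ with hsdef
    have hspos : ∀ k, 0 < s k := by
      intro k
      have h1 : θ / (2 * Real.pi) ≤ ⌈θ / (2 * Real.pi)⌉ := Int.le_ceil _
      have h2 : (⌈θ / (2 * Real.pi)⌉ : ℝ) < (n k : ℝ) := by
        rw [hndef]
        push_cast
        have : (0:ℝ) ≤ (k : ℝ) := Nat.cast_nonneg k
        linarith
      have h3 : θ < 2 * Real.pi * (n k) := by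
        have h4 : θ ≤ (⌈θ / (2 * Real.pi)⌉ : ℝ) * (2 * Real.pi) :=
          (div_le_iff₀ (by linarith)).mp h1
        nlinarith [mul_lt_mul_of_pos_right h2 (show (0:ℝ) < 2 * Real.pi by linarith)]
      simp only [hsdef]
      linarith
    set xs : ℕ → ℝ := fun k => x₀ - 1 / (δ * s k) with hxsdef
    have hxlt : ∀ k, xs k < x₀ := by
      intro k
      have : 0 < 1 / (δ * s k) := div_pos one_pos (mul_pos hδ (hspos k))
      simp only [hxsdef]
      linarith
    have hden : ∀ k, δ * xs k - 1 / Real.pi = -(1 / s k) := by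
      intro k
      have hs : s k ≠ 0 := (hspos k).ne'
      have hmul : δ * (1 / (δ * s k)) = 1 / s k := by
        field_simp
      calc δ * xs k - 1 / Real.pi
          = (δ * x₀ - 1 / Real.pi) - δ * (1 / (δ * s k)) := by
            simp only [hxsdef]; ring
        _ = -(1 / s k) := by rw [hx₀val, hmul]; ring
    have hgxs : ∀ k, g (xs k) = Real.sin θ := by
      intro k
      have hs := (hspos k).ne'
      simp only [hgdef]
      rw [hden k]
      have : 1 / -(1 / s k) = θ - (n k) * (2 * Real.pi) := by
        rw [hsdef]
        field_simp
        ring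
      rw [this, Real.sin_sub_int_mul_two_pi]
    have hstend : Tendsto s atTop atTop := by
      apply tendsto_atTop_atTop.mpr
      intro b
      obtain ⟨K, hK⟩ := exists_nat_gt ((b + θ) / (2 * Real.pi) - (⌈θ / (2 * Real.pi)⌉ : ℝ))
      refine ⟨K, fun k hk => ?_⟩
      have hkK : (K : ℝ) ≤ (k : ℝ) := Nat.cast_le.mpr hk
      have hnk : (b + θ) / (2 * Real.pi) ≤ (n k : ℝ) := by
        rw [hndef]
        push_cast
        linarith
      have h5 : b + θ ≤ (n k : ℝ) * (2 * Real.pi) := (div_le_iff₀ (by linarith)).mp hnk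
      simp only [hsdef]
      nlinarith
    have hxst : Tendsto xs atTop (𝓝 x₀) := by
      have h1 : Tendsto (fun k => δ * s k) atTop atTop :=
        (tendsto_const_mul_atTop_of_pos hδ).mpr hstend
      have h2 : Tendsto (fun k => 1 / (δ * s k)) atTop (𝓝 0) := by
        simp only [one_div]
        exact tendsto_inv_atTop_zero.comp h1
      have h3 : Tendsto xs atTop (𝓝 (x₀ - 0)) := tendsto_const_nhds.sub h2
      simpa using h3
    refine ⟨xs, hxlt, hxst, fun k => ?_⟩
    have := hgraph (xs k) (hxlt k)
    rwa [hgxs k] at this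
  -- the vertical-segment points (x₀, sin θ) are all in Γ
  have hseg : ∀ θ : ℝ, (x₀, Real.sin θ) ∈ Γ := by
    intro θ
    obtain ⟨xs, hxlt, hxst, hxΓ⟩ := htail θ
    have ht : Tendsto (fun k => (xs k, Real.sin θ)) atTop (𝓝 (x₀, Real.sin θ)) :=
      hxst.prodMk_nhds tendsto_const_nhds
    exact hΓc.mem_of_tendsto ht (Filter.Eventually.of_forall hxΓ)
  -- the bad point
  have hpΓ : ((x₀, (1:ℝ)) : ℝ × ℝ) ∈ Γ := by
    have := hseg (Real.pi / 2)
    rwa [Real.sin_pi_div_two] at this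
  obtain ⟨U, f, hU, hpU, hf, hΓU, hgrad⟩ := hloc _ hpΓ
  have hfa : AnalyticAt ℝ f (x₀, (1:ℝ)) :=
    ((hU.analyticOn_iff_analyticOnNhd).mp hf) _ hpU
  have hdf : HasFDerivAt f (fderiv ℝ f (x₀, (1:ℝ))) (x₀, (1:ℝ)) :=
    hfa.differentiableAt.hasFDerivAt
  set L := fderiv ℝ f (x₀, (1:ℝ)) with hLdef
  have hfzero : ∀ q ∈ Γ, q ∈ U → f q = 0 := by
    intro q hq hqU
    have : q ∈ Γ ∩ U := ⟨hq, hqU⟩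
    rw [hΓU] at this
    exact this.2
  have hfp : f (x₀, (1:ℝ)) = 0 := hfzero _ hpΓ hpU
  -- horizontal derivative is zero
  have h10 : L ((1:ℝ), (0:ℝ)) = 0 := by
    obtain ⟨xs, hxlt, hxst, hxΓ⟩ := htail (Real.pi / 2)
    have hxΓ' : ∀ k, ((xs k, (1:ℝ)) : ℝ × ℝ) ∈ Γ := by
      intro k
      have := hxΓ k
      rwa [Real.sin_pi_div_two] at this
    have hj : HasDerivAt (fun x : ℝ => ((x, (1:ℝ)) : ℝ × ℝ)) ((1:ℝ), (0:ℝ)) x₀ :=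
      (hasDerivAt_id x₀).prodMk (hasDerivAt_const x₀ (1:ℝ))
    have hφ : HasDerivAt (fun x : ℝ => f (x, (1:ℝ))) (L ((1:ℝ), (0:ℝ))) x₀ :=
      hdf.comp_hasDerivAt x₀ hj
    have htU : ∀ᶠ k in atTop, ((xs k, (1:ℝ)) : ℝ × ℝ) ∈ U := by
      have ht : Tendsto (fun k => ((xs k, (1:ℝ)) : ℝ × ℝ)) atTop (𝓝 (x₀, 1)) :=
        hxst.prodMk_nhds tendsto_const_nhds
      exact ht.eventually_mem (hU.mem_nhds hpU)
    refine deriv_zero_of_seq hφ xs hxst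
      (Filter.Eventually.of_forall fun k => (hxlt k).ne) ?_
    filter_upwards [htU] with k hk
    rw [hfzero _ (hxΓ' k) hk, hfp]
  -- vertical derivative is zero
  have h01 : L ((0:ℝ), (1:ℝ)) = 0 := by
    set ys : ℕ → ℝ := fun n => Real.sin (Real.pi / 2 - 1 / (n + 1)) with hysdef
    have hysΓ : ∀ n, ((x₀, ys n) : ℝ × ℝ) ∈ Γ := fun n => hseg _
    have hyslt : ∀ n : ℕ, ys n < 1 := by
      intro n
      have h1 : (0:ℝ) < 1 / ((n:ℝ) + 1) := by positivity
      have h2 : 1 / ((n:ℝ) + 1) ≤ 1 := by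
        rw [div_le_one (by positivity)]
        linarith [Nat.cast_nonneg (α := ℝ) n]
      have hπ3 : (3:ℝ) < Real.pi := Real.pi_gt_three
      have := Real.sin_lt_sin_of_lt_of_le_pi_div_two
        (x := Real.pi / 2 - 1 / (n + 1)) (y := Real.pi / 2)
        (by linarith) le_rfl (by linarith)
      rwa [Real.sin_pi_div_two] at this
    have hyst : Tendsto ys atTop (𝓝 1) := by
      have h1 : Tendsto (fun n : ℕ => 1 / ((n:ℝ) + 1)) atTop (𝓝 0) :=
        tendsto_one_div_add_atTop_nhds_zero_nat
      have h2 : Tendsto (fun n : ℕ => Real.pi / 2 - 1 / ((n:ℝ) + 1)) atTop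
          (𝓝 (Real.pi / 2)) := by
        simpa using tendsto_const_nhds.sub h1
      have h3 : Tendsto ys atTop (𝓝 (Real.sin (Real.pi / 2))) :=
        (Real.continuous_sin.tendsto _).comp h2
      rwa [Real.sin_pi_div_two] at h3
    have hj : HasDerivAt (fun y : ℝ => ((x₀, y) : ℝ × ℝ)) ((0:ℝ), (1:ℝ)) 1 :=
      (hasDerivAt_const 1 x₀).prodMk (hasDerivAt_id 1)
    have hφ : HasDerivAt (fun y : ℝ => f (x₀, y)) (L ((0:ℝ), (1:ℝ))) 1 :=
      hdf.comp_hasDerivAt 1 hj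
    have htU : ∀ᶠ n in atTop, ((x₀, ys n) : ℝ × ℝ) ∈ U := by
      have ht : Tendsto (fun n => ((x₀, ys n) : ℝ × ℝ)) atTop (𝓝 (x₀, 1)) :=
        tendsto_const_nhds.prodMk_nhds hyst
      exact ht.eventually_mem (hU.mem_nhds hpU)
    refine deriv_zero_of_seq hφ ys hyst
      (Filter.Eventually.of_forall fun n => (hyslt n).ne) ?_
    filter_upwards [htU] with n hn
    rw [hfzero _ (hysΓ n) hn, hfp]
  -- conclude the gradient vanishes, contradiction
  apply hgrad _ hpU
  rw [← hLdef]
  apply ContinuousLinearMap.ext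
  intro v
  have hv : v = v.1 • (((1:ℝ), (0:ℝ)) : ℝ × ℝ) + v.2 • (((0:ℝ), (1:ℝ)) : ℝ × ℝ) := by
    apply Prod.ext <;> simp
  rw [hv, map_add, map_smul, map_smul, h10, h01]
  simp
end

section
/- The singular locus claim for X = {z⁴ = x³ + wxz²}: at every point of X of the form (0, w, 0) with w < 0, the set X is not locally a smooth 2-dimensional submanifold of ℝ³; in particular the intersection of X with a small ball around such a point is not a C¹ manifold. (It suffices to show X near (0,w,0), w<0, contains the two transversally intersecting curves {x = z = 0} and {z² = wx + higher order}-branches, e.g. the curves z=0, x=0 and the branch with x = z²·h(z,w) crossing it.) -/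
open Topology Filter


set_option maxHeartbeats 1000000 in
theorem X_not_locally_manifold_on_negative_w_axis
    (X : Set (ℝ × ℝ × ℝ))
    (hX : X = {p : ℝ × ℝ × ℝ | p.2.2 ^ 4 = p.1 ^ 3 + p.2.1 * p.1 * p.2.2 ^ 2})
    (w : ℝ) (hw : w < 0) :
    ¬ ∃ (U V : Set (ℝ × ℝ × ℝ)) (F G : ℝ × ℝ × ℝ → ℝ × ℝ × ℝ),
      IsOpen U ∧ IsOpen V ∧ (0, w, 0) ∈ U ∧
      ContDiffOn ℝ 1 F U ∧ ContDiffOn ℝ 1 G V ∧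
      F '' U = V ∧ (∀ p ∈ U, G (F p) = p) ∧ (∀ p ∈ V, F (G p) = p) ∧
      F '' (X ∩ U) = {p ∈ V | p.2.2 = 0} := by
  rintro ⟨U, V, F, G, hU, hV, hp0U, hF, hG, hFUV, hGF, hFG, hFX⟩
  set p0 : ℝ × ℝ × ℝ := (0, w, 0) with hp0def
  have hFp0V : F p0 ∈ V := by rw [← hFUV]; exact Set.mem_image_of_mem F hp0U
  have hFd : DifferentiableAt ℝ F p0 :=
    (hF.contDiffAt (hU.mem_nhds hp0U)).differentiableAt one_ne_zero
  have hGd : DifferentiableAt ℝ G (F p0) :=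
    (hG.contDiffAt (hV.mem_nhds hFp0V)).differentiableAt one_ne_zero
  set f' := fderiv ℝ F p0 with hf'
  have heq : (G ∘ F) =ᶠ[𝓝 p0] id := by
    filter_upwards [hU.mem_nhds hp0U] with p hp
    exact hGF p hp
  have hcomp : (fderiv ℝ G (F p0)).comp f' = ContinuousLinearMap.id ℝ (ℝ × ℝ × ℝ) := by
    rw [← fderiv_comp p0 hGd hFd, heq.fderiv_eq, fderiv_id]
  have hinj : Function.Injective f' := by
    intro u v huv
    have hu : fderiv ℝ G (F p0) (f' u) = u := by
      have := congrArg (fun (T : (ℝ × ℝ × ℝ) →L[ℝ] (ℝ × ℝ × ℝ)) => T u) hcomp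
      simpa using this
    have hv : fderiv ℝ G (F p0) (f' v) = v := by
      have := congrArg (fun (T : (ℝ × ℝ × ℝ) →L[ℝ] (ℝ × ℝ × ℝ)) => T v) hcomp
      simpa using this
    rw [← hu, ← hv, huv]
  set L : (ℝ × ℝ × ℝ) →L[ℝ] ℝ :=
    (ContinuousLinearMap.snd ℝ ℝ ℝ).comp (ContinuousLinearMap.snd ℝ ℝ (ℝ × ℝ)) with hL
  have hLz : ∀ p ∈ X ∩ U, (F p).2.2 = 0 := by
    intro p hp
    have : F p ∈ {p ∈ V | p.2.2 = 0} := by rw [← hFX]; exact Set.mem_image_of_mem F hp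
    exact this.2
  have key : ∀ (γ : ℝ → ℝ × ℝ × ℝ) (v : ℝ × ℝ × ℝ), HasDerivAt γ v 0 → γ 0 = p0 →
      (∀ᶠ t in 𝓝 (0 : ℝ), γ t ∈ X ∩ U) → (f' v).2.2 = 0 := by
    intro γ v hγ hγ0 hmem
    have hFd' : HasFDerivAt F f' (γ 0) := by rw [hγ0]; exact hFd.hasFDerivAt
    have hd : HasDerivAt (fun t => L (F (γ t))) (L (f' v)) 0 :=
      L.hasFDerivAt.comp_hasDerivAt 0 (hFd'.comp_hasDerivAt 0 hγ)
    have hzero : (fun t => L (F (γ t))) =ᶠ[𝓝 (0 : ℝ)] fun _ => (0 : ℝ) := by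
      filter_upwards [hmem] with t ht
      exact hLz _ ht
    have h0 : HasDerivAt (fun t => L (F (γ t))) 0 0 :=
      (hasDerivAt_const (0 : ℝ) (0 : ℝ)).congr_of_eventuallyEq hzero
    exact hd.unique h0
  -- the line direction
  have k2 : (f' (0, 1, 0)).2.2 = 0 := by
    apply key (fun t => (0, w + t, 0)) (0, 1, 0)
    · exact (hasDerivAt_const (0 : ℝ) (0 : ℝ)).prodMk
        (((hasDerivAt_id (0 : ℝ)).const_add w).prodMk (hasDerivAt_const (0 : ℝ) (0 : ℝ)))
    · simp [hp0def]
    · have hc : ContinuousAt (fun t : ℝ => ((0 : ℝ), w + t, (0 : ℝ))) 0 := by fun_prop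
      have hUev : ∀ᶠ t in 𝓝 (0 : ℝ), ((0 : ℝ), w + t, (0 : ℝ)) ∈ U := by
        have : ((0 : ℝ), w + 0, (0 : ℝ)) = p0 := by simp [hp0def]
        exact hc.preimage_mem_nhds (by rw [this]; exact hU.mem_nhds hp0U)
      filter_upwards [hUev] with t ht
      refine ⟨?_, ht⟩
      rw [hX]
      simp
  -- the branch curves
  set s : ℝ → ℝ := fun t => Real.sqrt (w ^ 2 + 4 * t) with hs
  set φ : ℝ → ℝ := fun t => Real.sqrt (2 / (s t - w)) with hφ
  have hsw : ∀ t, 0 < s t - w := by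
    intro t
    have := Real.sqrt_nonneg (w ^ 2 + 4 * t)
    simp only [hs]
    linarith
  have hφc : ContinuousAt φ 0 := by
    apply Real.continuous_sqrt.continuousAt.comp
    apply ContinuousAt.div continuousAt_const
    · exact ((Real.continuous_sqrt.comp (by continuity)).continuousAt).sub continuousAt_const
    · exact (hsw 0).ne'
  set a : ℝ := φ 0 with ha'
  have ha : 0 < a := Real.sqrt_pos.mpr (div_pos two_pos (hsw 0))
  have hderiv : HasDerivAt (fun t => t * φ t) a 0 := by
    rw [hasDerivAt_iff_tendsto_slope]
    have hsl : ∀ᶠ t in 𝓝[≠] (0 : ℝ), slope (fun t => t * φ t) 0 t = φ t := by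
      filter_upwards [self_mem_nhdsWithin] with t ht
      have ht' : t ≠ 0 := ht
      simp only [slope, vsub_eq_sub, sub_zero, mul_comm]
      rw [smul_eq_mul, zero_mul, sub_zero]; field_simp
    rw [tendsto_congr' hsl]
    exact hφc.tendsto.mono_left nhdsWithin_le_nhds
  have halg : ∀ t z : ℝ, 0 ≤ w ^ 2 + 4 * t → z ^ 2 = 2 * t ^ 2 / (s t - w) →
      z ^ 4 = t ^ 3 + w * t * z ^ 2 := by
    intro t z h0 hz
    have hs2 : s t ^ 2 = w ^ 2 + 4 * t := Real.sq_sqrt h0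
    have hne := (hsw t).ne'
    have hz4 : z ^ 4 = (z ^ 2) ^ 2 := by ring
    rw [hz4, hz]
    field_simp
    linear_combination (-(t ^ 3)) * hs2
  have hsq : ∀ t : ℝ, (t * φ t) ^ 2 = 2 * t ^ 2 / (s t - w) := by
    intro t
    have : (φ t) ^ 2 = 2 / (s t - w) :=
      Real.sq_sqrt (div_nonneg (by norm_num) (hsw t).le)
    rw [mul_pow, this]
    ring
  have hev : ∀ᶠ t in 𝓝 (0 : ℝ), 0 ≤ w ^ 2 + 4 * t := by
    have : Tendsto (fun t : ℝ => w ^ 2 + 4 * t) (𝓝 0) (𝓝 (w ^ 2 + 4 * 0)) :=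
      (continuous_const.add (continuous_const.mul continuous_id)).tendsto 0
    have hpos : (0 : ℝ) < w ^ 2 + 4 * 0 := by nlinarith
    filter_upwards [this.eventually (eventually_gt_nhds hpos)] with t ht using ht.le
  have kbranch : ∀ ε : ℝ, ε = 1 ∨ ε = -1 → (f' (1, 0, ε * a)).2.2 = 0 := by
    intro ε hε
    apply key (fun t => (t, w, ε * (t * φ t))) (1, 0, ε * a)
    · exact (hasDerivAt_id (0 : ℝ)).prodMk
        ((hasDerivAt_const (0 : ℝ) w).prodMk (hderiv.const_mul ε))
    · simp [hp0def]
    · have hγc : ContinuousAt (fun t : ℝ => (t, w, ε * (t * φ t))) 0 := by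
        have h3 : ContinuousAt (fun t : ℝ => ε * (t * φ t)) 0 :=
          (continuousAt_const.mul hderiv.continuousAt)
        exact continuousAt_id.prodMk (continuousAt_const.prodMk h3)
      have hUev : ∀ᶠ t in 𝓝 (0 : ℝ), ((t : ℝ), w, ε * (t * φ t)) ∈ U := by
        have h0 : ((0 : ℝ), w, ε * (0 * φ 0)) = p0 := by simp [hp0def]
        exact hγc.preimage_mem_nhds (by rw [h0]; exact hU.mem_nhds hp0U)
      filter_upwards [hUev, hev] with t ht h4
      refine ⟨?_, ht⟩
      rw [hX]
      have hz2 : (ε * (t * φ t)) ^ 2 = 2 * t ^ 2 / (s t - w) := by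
        rcases hε with h | h <;> rw [h] <;> simpa using hsq t
      exact halg t (ε * (t * φ t)) h4 hz2
  have k1 : (f' (1, 0, a)).2.2 = 0 := by
    simpa using kbranch 1 (Or.inl rfl)
  have k3 : (f' (1, 0, -a)).2.2 = 0 := by
    simpa using kbranch (-1) (Or.inr rfl)
  have hane : a ≠ 0 := ha.ne'
  clear_value a
  clear ha' hderiv hφc hsq
  clear_value f'
  have hv3 : ∀ v : ℝ × ℝ × ℝ, (f' v).2.2 = 0 := by
    rintro ⟨v1, v2, v3⟩
    have hrepr : ((v1, v2, v3) : ℝ × ℝ × ℝ) =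
        ((v1 + v3 / a) / 2) • ((1 : ℝ), (0 : ℝ), a) + v2 • ((0 : ℝ), (1 : ℝ), (0 : ℝ))
          + ((v1 - v3 / a) / 2) • ((1 : ℝ), (0 : ℝ), -a) := by
      simp only [Prod.smul_mk, smul_eq_mul, Prod.mk_add_mk, Prod.mk.injEq]
      refine ⟨by ring, by ring, ?_⟩
      field_simp
      ring
    rw [hrepr]
    simp only [map_add, map_smul, Prod.fst_add, Prod.snd_add, Prod.smul_snd, Prod.smul_fst,
      smul_eq_mul]
    rw [k1, k2, k3]
    ring
  have hMinj : Function.Injective (fun v : ℝ × ℝ × ℝ => ((f' v).1, (f' v).2.1)) := by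
    intro u v huv
    apply hinj
    have huv' : ((f' u).1, (f' u).2.1) = ((f' v).1, (f' v).2.1) := huv
    have h1 : (f' u).1 = (f' v).1 := (Prod.ext_iff.mp huv').1
    have h2 : (f' u).2.1 = (f' v).2.1 := (Prod.ext_iff.mp huv').2
    exact Prod.ext h1 (Prod.ext h2 (by rw [hv3, hv3]))
  set M : (ℝ × ℝ × ℝ) →L[ℝ] ℝ × ℝ :=
    ((ContinuousLinearMap.fst ℝ ℝ (ℝ × ℝ)).prod
      ((ContinuousLinearMap.fst ℝ ℝ ℝ).comp (ContinuousLinearMap.snd ℝ ℝ (ℝ × ℝ)))).comp f'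
    with hM
  have hMinj' : Function.Injective (M : (ℝ × ℝ × ℝ) →ₗ[ℝ] ℝ × ℝ) := hMinj
  have hfin := LinearMap.finrank_le_finrank_of_injective
    (f := (M : (ℝ × ℝ × ℝ) →ₗ[ℝ] ℝ × ℝ)) hMinj' 
  have h3 : Module.finrank ℝ (ℝ × ℝ × ℝ) = 3 := by
    rw [Module.finrank_prod, Module.finrank_prod, Module.finrank_self]
  have h2' : Module.finrank ℝ (ℝ × ℝ) = 2 := by
    rw [Module.finrank_prod, Module.finrank_self]
  rw [h3, h2'] at hfin
  omega
end
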